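/- For any directed acyclic graph D = (V, A), the number of join irreducible elements of the acyclic reorientation poset AR(D) is at least |A|, and likewise the number of meet irreducible elements of AR(D) is at least |A|. -/

import Mathlib

def ArcRel {V : Type*} (E : Set (V × V)) : V → V → Prop := fun x y => (x, y) ∈ E

/-- `E` has no directed cycle. -/
def AcyclicArcs {V : Type*} (E : Set (V × V)) : Prop :=
  ∀ v : V, ¬ Relation.TransGen (ArcRel E) v v

/-- `A` is the arc set of a directed acyclic graph: arcs join distinct vertices,
at most one direction between two vertices, and no directed cycle. -/
def IsDAG {V : Type*} (A : Set (V × V)) : Prop :=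
  (∀ a ∈ A, a.1 ≠ a.2) ∧ (∀ a ∈ A, Prod.swap a ∉ A) ∧ AcyclicArcs A

/-- Arc set of the reorientation of `A` where exactly the arcs of `B` are reversed. -/
def reorient {V : Type*} (A B : Set (V × V)) : Set (V × V) :=
  (A \ B) ∪ (Prod.swap '' B)

/-- `B` encodes an acyclic reorientation of `A`. -/
def ARmem {V : Type*} (A B : Set (V × V)) : Prop :=
  B ⊆ A ∧ AcyclicArcs (reorient A B)

/-- The acyclic reorientation poset of `A`, ordered by inclusion of reversed sets. -/
abbrev ARP {V : Type*} (A : Set (V × V)) := {B : Set (V × V) // ARmem A B}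

open Relation Set

section Aux
variable {V : Type*}

lemma arcRel_iff (E : Set (V × V)) (x y : V) : ArcRel E x y ↔ (x, y) ∈ E := Iff.rfl

lemma mem_swap_image {B : Set (V × V)} {x y : V} :
    (x, y) ∈ Prod.swap '' B ↔ (y, x) ∈ B := by
  constructor
  · rintro ⟨⟨p, q⟩, h, heq⟩
    simp only [Prod.swap_prod_mk, Prod.mk.injEq] at heq
    obtain ⟨rfl, rfl⟩ := heq
    exact h
  · intro h; exact ⟨(y, x), h, rfl⟩

lemma arcRel_reorient {A B : Set (V × V)} {x y : V} :
    ArcRel (reorient A B) x y ↔ (((x, y) ∈ A ∧ (x, y) ∉ B) ∨ (y, x) ∈ B) := by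
  rw [arcRel_iff, reorient, Set.mem_union, Set.mem_diff, mem_swap_image]

lemma acyclic_swap {E : Set (V × V)} (hE : AcyclicArcs E) : AcyclicArcs (Prod.swap '' E) := by
  intro v hv
  have : Relation.TransGen (Function.swap (ArcRel E)) v v := by
    refine Relation.TransGen.mono (fun x y h => ?_) _ _ hv
    exact mem_swap_image.1 h
  exact hE v (Relation.transGen_swap.1 this)

variable [Fintype V]

noncomputable def Lfun (E : Set (V × V)) (v : V) : ℕ :=
  {w | Relation.TransGen (ArcRel E) w v}.ncard * (Fintype.card V + 1) + (Fintype.equivFin V v : ℕ)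

lemma Lfun_lt {E : Set (V × V)} (hE : AcyclicArcs E) {x y : V} (h : ArcRel E x y) :
    Lfun E x < Lfun E y := by
  have hsub : insert x {w | Relation.TransGen (ArcRel E) w x} ⊆ {w | Relation.TransGen (ArcRel E) w y} := by
    rintro w hw
    rcases Set.mem_insert_iff.1 hw with rfl | hw
    · exact Relation.TransGen.single h
    · exact Relation.TransGen.tail hw h
  have hx : x ∉ {w | Relation.TransGen (ArcRel E) w x} := hE x
  have hlt : {w | Relation.TransGen (ArcRel E) w x}.ncard <
      {w | Relation.TransGen (ArcRel E) w y}.ncard := by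
    have h1 := Set.ncard_insert_of_notMem hx (Set.toFinite _)
    have h2 := Set.ncard_le_ncard hsub (Set.toFinite _)
    omega
  have he : (Fintype.equivFin V x : ℕ) < Fintype.card V + 1 := by
    have := (Fintype.equivFin V x).2; omega
  calc Lfun E x < {w | Relation.TransGen (ArcRel E) w x}.ncard * (Fintype.card V + 1) + (Fintype.card V + 1) := by
        unfold Lfun; omega
    _ = ({w | Relation.TransGen (ArcRel E) w x}.ncard + 1) * (Fintype.card V + 1) := by ring
    _ ≤ {w | Relation.TransGen (ArcRel E) w y}.ncard * (Fintype.card V + 1) :=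
        Nat.mul_le_mul_right (Fintype.card V + 1) hlt
    _ ≤ Lfun E y := Nat.le_add_right _ _

lemma Lfun_injective (E : Set (V × V)) : Function.Injective (Lfun E) := by
  intro x y hxy
  have hx : (Fintype.equivFin V x : ℕ) < Fintype.card V + 1 := by
    have := (Fintype.equivFin V x).2; omega
  have hy : (Fintype.equivFin V y : ℕ) < Fintype.card V + 1 := by
    have := (Fintype.equivFin V y).2; omega
  have hmod := congrArg (· % (Fintype.card V + 1)) hxy
  simp only [Lfun, Nat.mul_add_mod_of_lt hx, Nat.mul_add_mod_of_lt hy] at hmod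
  exact (Fintype.equivFin V).injective (Fin.val_injective hmod)


lemma cycle_extract {α : Type*} {S : α → α → Prop} {u v : α}
    (hS : ∀ z, ¬ Relation.TransGen S z z) {c : α}
    (hc : Relation.TransGen (fun x y => S x y ∨ (x, y) = (u, v)) c c) :
    Relation.ReflTransGen S v u := by
  by_contra hvu
  have key : ∀ a b, Relation.TransGen (fun x y => S x y ∨ (x, y) = (u, v)) a b →
      Relation.TransGen S a b ∨ (Relation.ReflTransGen S a u ∧ Relation.ReflTransGen S v b) := by
    intro a b h
    induction h with
    | single h =>
      rcases h with h | h
      · exact Or.inl (Relation.TransGen.single h)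
      · rw [Prod.mk.injEq] at h
        obtain ⟨rfl, rfl⟩ := h
        exact Or.inr ⟨Relation.ReflTransGen.refl, Relation.ReflTransGen.refl⟩
    | tail hab hbc ih =>
      rcases hbc with hbc | hbc
      · rcases ih with ih | ⟨ih1, ih2⟩
        · exact Or.inl (ih.tail hbc)
        · exact Or.inr ⟨ih1, ih2.tail hbc⟩
      · rw [Prod.mk.injEq] at hbc
        obtain ⟨rfl, rfl⟩ := hbc
        rcases ih with ih | ⟨ih1, ih2⟩
        · exact Or.inr ⟨ih.to_reflTransGen, Relation.ReflTransGen.refl⟩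
        · exact absurd ih2 hvu
  rcases key c c hc with h | ⟨h1, h2⟩
  · exact hS c h
  · exact hvu (h2.trans h1)

lemma reorient_diff_single {V : Type*} {A B : Set (V × V)} {u v : V}
    (hvuA : (v, u) ∉ A) (huvA : (u, v) ∈ A) (huv : (u, v) ∈ B) :
    reorient A (B \ {(u, v)}) = ((reorient A B) \ {(v, u)}) ∪ {(u, v)} := by
  have h1 : A \ (B \ {(u, v)}) = (A \ B) ∪ {(u, v)} := by
    ext x
    simp only [Set.mem_diff, Set.mem_singleton_iff, Set.mem_union]
    constructor
    · rintro ⟨hxA, hx⟩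
      by_cases hxa : x = (u, v)
      · exact Or.inr hxa
      · exact Or.inl ⟨hxA, fun hxB => hx ⟨hxB, hxa⟩⟩
    · rintro (⟨hxA, hxB⟩ | rfl)
      · exact ⟨hxA, fun h => hxB h.1⟩
      · exact ⟨huvA, fun h => h.2 rfl⟩
  have h2 : Prod.swap '' (B \ {(u, v)}) = (Prod.swap '' B) \ {(v, u)} := by
    rw [Set.image_diff Prod.swap_injective, Set.image_singleton, Prod.swap_prod_mk]
  have h3 : (A \ B) \ {(v, u)} = A \ B :=
    Set.diff_singleton_eq_self (fun h => hvuA h.1)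
  rw [reorient, reorient, h1, h2, Set.union_diff_distrib, h3]
  ext x
  simp only [Set.mem_union]
  tauto

lemma transGen_arcRel_mono {V : Type*} {E : Set (V × V)} {S : V → V → Prop}
    (hS : ∀ x y, S x y → ArcRel E x y) (hE : AcyclicArcs E) : ∀ z, ¬ Relation.TransGen S z z :=
  fun z hz => hE z (Relation.TransGen.mono hS _ _ hz)

lemma path_decomp {V : Type*} {A B C : Set (V × V)} (hCB : C ⊆ B) {u v : V}
    (L : V → ℕ) (hL : ∀ x y, ArcRel (reorient A B) x y → L x < L y)
    {x y : V}
    (h : Relation.TransGen (fun p q => ArcRel (reorient A B) p q ∧ (p, q) ≠ (v, u)) x y) :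
    Relation.TransGen (ArcRel (reorient A C)) x y ∨
      ∃ p q : V, (p, q) ∈ B ∧ (p, q) ∉ C ∧ (q, p) ≠ (v, u) ∧ L x ≤ L q ∧ L p ≤ L y := by
  have hmono : ∀ p q : V,
      Relation.TransGen (fun p q => ArcRel (reorient A B) p q ∧ (p, q) ≠ (v, u)) p q →
      L p < L q := by
    intro p q hpq
    induction hpq with
    | single h => exact hL _ _ h.1
    | tail _ h ih => exact ih.trans (hL _ _ h.1)
  have hclassify : ∀ p q : V, ArcRel (reorient A B) p q ∧ (p, q) ≠ (v, u) →
      ArcRel (reorient A C) p q ∨ ((q, p) ∈ B ∧ (q, p) ∉ C ∧ (p, q) ≠ (v, u)) := by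
    rintro p q ⟨hpq, hne⟩
    rcases arcRel_reorient.1 hpq with ⟨hpqA, hpqB⟩ | hqpB
    · exact Or.inl (arcRel_reorient.2 (Or.inl ⟨hpqA, fun h => hpqB (hCB h)⟩))
    · by_cases hqpC : (q, p) ∈ C
      · exact Or.inl (arcRel_reorient.2 (Or.inr hqpC))
      · exact Or.inr ⟨hqpB, hqpC, hne⟩
  induction h with
  | @single b hstep =>
    rcases hclassify _ _ hstep with h | ⟨h1, h2, h3⟩
    · exact Or.inl (Relation.TransGen.single h)
    · exact Or.inr ⟨b, x, h1, h2, h3, le_refl _, le_refl _⟩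
  | @tail b c hab hbc ih =>
    rcases hclassify _ _ hbc with hstep | ⟨h1, h2, h3⟩
    · rcases ih with ih | ⟨p, q, hp1, hp2, hp3, hp4, hp5⟩
      · exact Or.inl (ih.tail hstep)
      · exact Or.inr ⟨p, q, hp1, hp2, hp3, hp4, hp5.trans (le_of_lt (hL _ _ hbc.1))⟩
    · rcases ih with ih | ⟨p, q, hp1, hp2, hp3, hp4, hp5⟩
      · exact Or.inr ⟨c, b, h1, h2, h3, le_of_lt (hmono _ _ hab), le_refl _⟩
      · exact Or.inr ⟨p, q, hp1, hp2, hp3, hp4, hp5.trans (le_of_lt (hL _ _ hbc.1))⟩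

lemma descent {V : Type*} [Fintype V] {A B C : Set (V × V)} (hA : IsDAG A)
    (hB : ARmem A B) (hC : ARmem A C) (hCB : C ⊆ B) (hne : C ≠ B) :
    ∃ a ∈ B \ C, ARmem A (B \ {a}) := by
  by_contra hcon
  push_neg at hcon
  have hLlt : ∀ x y, ArcRel (reorient A B) x y → Lfun (reorient A B) x < Lfun (reorient A B) y :=
    fun x y h => Lfun_lt hB.2 h
  have hLinj := Lfun_injective (V := V) (reorient A B)
  set L := Lfun (reorient A B) with hLdef
  have hBC : (B \ C).Nonempty := by
    rw [Set.nonempty_iff_ne_empty]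
    intro h
    exact hne (le_antisymm hCB (Set.diff_eq_empty.1 h))
  obtain ⟨a, haBC, hamin⟩ := Set.exists_min_image (B \ C) (fun a => L a.1 - L a.2)
    (Set.toFinite _) hBC
  obtain ⟨u, v⟩ := a
  have huvB : (u, v) ∈ B := haBC.1
  have huvA : (u, v) ∈ A := hB.1 huvB
  have hvuA : (v, u) ∉ A := by
    have := hA.2.1 _ huvA
    simpa using this
  have hnot := hcon (u, v) haBC
  have hsubA : B \ {(u, v)} ⊆ A := fun x hx => hB.1 hx.1
  have hnacyc : ¬ AcyclicArcs (reorient A (B \ {(u, v)})) := fun h => hnot ⟨hsubA, h⟩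
  rw [AcyclicArcs] at hnacyc
  push_neg at hnacyc
  obtain ⟨c, hc⟩ := hnacyc
  have hrw := reorient_diff_single hvuA huvA huvB
  set S' : V → V → Prop := fun p q => ArcRel (reorient A B) p q ∧ (p, q) ≠ (v, u) with hS'
  have hS'acyc : ∀ z, ¬ Relation.TransGen S' z z :=
    transGen_arcRel_mono (fun x y h => h.1) hB.2
  have hc' : Relation.TransGen (fun p q => S' p q ∨ (p, q) = (u, v)) c c := by
    refine Relation.TransGen.mono (fun p q h => ?_) _ _ hc
    have h' : (p, q) ∈ ((reorient A B) \ {(v, u)}) ∪ {(u, v)} := by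
      rw [← hrw]; exact h
    rcases h' with h' | h'
    · exact Or.inl ⟨h'.1, h'.2⟩
    · exact Or.inr h'
  have hRT := cycle_extract hS'acyc hc'
  have huvne : u ≠ v := hA.1 _ huvA
  have hTG : Relation.TransGen S' v u := by
    rcases Relation.reflTransGen_iff_eq_or_transGen.1 hRT with heq | h
    · exact absurd heq huvne
    · exact h
  rcases path_decomp hCB L hLlt hTG with hEC | ⟨p, q, hpqB, hpqC, hqpne, h1, h2⟩
  · have harc : ArcRel (reorient A C) u v :=
      arcRel_reorient.2 (Or.inl ⟨huvA, fun h => haBC.2 h⟩)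
    exact hC.2 u (Relation.TransGen.head harc hEC)
  · have hqp : ArcRel (reorient A B) q p := arcRel_reorient.2 (Or.inr hpqB)
    have h3 : L q < L p := hLlt _ _ hqp
    have h4 : L v < L u := hLlt _ _ (arcRel_reorient.2 (Or.inr huvB))
    have hmin := hamin (p, q) ⟨hpqB, hpqC⟩
    simp only at hmin
    have hq : L q = L v ∧ L p = L u := by omega
    exact hqpne (by rw [Prod.mk.injEq]; exact ⟨hLinj hq.1, hLinj hq.2⟩)

lemma ARmem_self {V : Type*} {A : Set (V × V)} (hA : IsDAG A) : ARmem A A := by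
  refine ⟨subset_rfl, ?_⟩
  have h : reorient A A = Prod.swap '' A := by
    rw [reorient, Set.diff_self, Set.empty_union]
  rw [h]
  exact acyclic_swap hA.2.2

lemma ARmem_empty {V : Type*} {A : Set (V × V)} (hA : IsDAG A) : ARmem A ∅ := by
  refine ⟨Set.empty_subset _, ?_⟩
  have h : reorient A ∅ = A := by
    rw [reorient, Set.diff_empty, Set.image_empty, Set.union_empty]
  rw [h]
  exact hA.2.2

lemma ARmem_compl {V : Type*} {A B : Set (V × V)} (hB : ARmem A B) : ARmem A (A \ B) := by
  refine ⟨Set.diff_subset, ?_⟩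
  have hswap : Prod.swap '' (Prod.swap '' B) = B := by
    rw [Set.image_image]; simp
  have h : reorient A (A \ B) = Prod.swap '' (reorient A B) := by
    rw [reorient, reorient, Set.diff_diff_cancel_left hB.1, Set.image_union, hswap,
      Set.union_comm]
  rw [h]
  exact acyclic_swap hB.2

lemma cover_of_diff_singleton {V : Type*} {A : Set (V × V)} {B C : ARP A} {a : V × V}
    (haB : a ∈ B.val) (hC : C.val = B.val \ {a}) : C ⋖ B := by
  have haC : a ∉ C.val := by rw [hC]; exact fun h => h.2 rfl
  constructor
  · rw [← Subtype.coe_lt_coe, lt_iff_le_and_ne]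
    exact ⟨hC ▸ Set.diff_subset, fun h => haC (h ▸ haB)⟩
  · intro D hCD hDB
    rw [← Subtype.coe_lt_coe, lt_iff_le_and_ne] at hCD hDB
    obtain ⟨x, hxD, hxC⟩ := Set.exists_of_ssubset (ssubset_of_subset_of_ne hCD.1 hCD.2)
    have hxB : x ∈ B.val := hDB.1 hxD
    have hxa : x = a := by
      by_contra hxa
      exact hxC (hC ▸ ⟨hxB, hxa⟩)
    apply hDB.2
    apply le_antisymm hDB.1
    intro y hyB
    by_cases hya : y = a
    · rw [hya, ← hxa]; exact hxD
    · exact hCD.1 (hC ▸ ⟨hyB, hya⟩)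

lemma exists_JI {V : Type*} [Fintype V] {A : Set (V × V)} (hA : IsDAG A) {a : V × V}
    (ha : a ∈ A) :
    ∃ B : ARP A, a ∈ B.val ∧ (∃ C : ARP A, C ⋖ B) ∧
      (∀ C : ARP A, C ⋖ B → C.val = B.val \ {a}) := by
  classical
  set Sa : Set (Set (V × V)) := {B | ARmem A B ∧ a ∈ B} with hSa
  have hfin : Sa.Finite :=
    ((Set.toFinite A).finite_subsets).subset (fun B hB => hB.1.1)
  have hne : Sa.Nonempty := ⟨A, ARmem_self hA, ha⟩
  obtain ⟨B, hBSa, hmin⟩ := Set.exists_min_image Sa Set.ncard hfin hne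
  have haB : a ∈ B := hBSa.2
  have hBmem : ARmem A B := hBSa.1
  -- the key uniqueness property
  have key : ∀ C : Set (V × V), ARmem A C → C ⊆ B → C ≠ B →
      (∃ a'' ∈ B \ C, ARmem A (B \ {a''}) ∧ C ⊆ B \ {a''}) := by
    intro C hCmem hCB hCne
    obtain ⟨a'', ha''BC, ha''mem⟩ := descent hA hBmem hCmem hCB hCne
    exact ⟨a'', ha''BC, ha''mem, fun x hx => ⟨hCB hx, fun hxa => ha''BC.2 (hxa ▸ hx)⟩⟩
  have hforce : ∀ a'' ∈ B, ARmem A (B \ {a''}) → a'' = a := by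
    intro a'' ha''B ha''mem
    by_contra hne'
    have haB' : a ∈ B \ {a''} := ⟨haB, fun h => hne' (Set.mem_singleton_iff.1 h).symm⟩
    have hmem : (B \ {a''}) ∈ Sa := ⟨ha''mem, haB'⟩
    have := hmin _ hmem
    have hlt := Set.ncard_diff_singleton_lt_of_mem ha''B (Set.toFinite _)
    omega
  have hEne : (∅ : Set (V × V)) ≠ B := fun h => (h ▸ haB : a ∈ (∅ : Set (V × V)))
  obtain ⟨a', ha'BC, ha'mem, -⟩ := key ∅ (ARmem_empty hA) (Set.empty_subset _) hEne
  have ha'B : a' ∈ B := by simpa using ha'BC.1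
  have ha'a : a' = a := hforce a' ha'B ha'mem
  subst ha'a
  refine ⟨⟨B, hBmem⟩, haB, ⟨⟨B \ {a'}, ha'mem⟩, cover_of_diff_singleton haB rfl⟩, ?_⟩
  intro C hC
  have hlt := hC.1
  rw [← Subtype.coe_lt_coe, lt_iff_le_and_ne] at hlt
  obtain ⟨a'', ha''BC, ha''mem, hCsub⟩ := key C.val C.2 hlt.1 hlt.2
  have ha''a : a'' = a' := hforce a'' ha''BC.1 ha''mem
  subst ha''a
  have hCD : C ≤ (⟨B \ {a''}, ha''mem⟩ : ARP A) := hCsub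
  have hDB : (⟨B \ {a''}, ha''mem⟩ : ARP A) ⋖ (⟨B, hBmem⟩ : ARP A) :=
    cover_of_diff_singleton ha''BC.1 rfl
  have hCeq : C = (⟨B \ {a''}, ha''mem⟩ : ARP A) := by
    by_contra hne'
    exact hC.2 (lt_of_le_of_ne hCD hne') hDB.1
  rw [hCeq]

end Aux

/-- The acyclic reorientation poset has at least `|A|` join
irreducible elements and at least `|A|` meet irreducible elements. -/
theorem stmt_10 {V : Type*} [Fintype V] (A : Set (V × V)) (hA : IsDAG A) :
    A.ncard ≤ {B : ARP A | ∃! C : ARP A, C ⋖ B}.ncard ∧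
    A.ncard ≤ {B : ARP A | ∃! C : ARP A, B ⋖ C}.ncard := by
  classical
  have hfinARP : Finite (ARP A) := by
    have h1 : {B : Set (V × V) | ARmem A B}.Finite :=
      ((Set.toFinite A).finite_subsets).subset (fun B hB => hB.1)
    exact h1.to_subtype
  haveI : Nonempty (ARP A) := ⟨⟨∅, ARmem_empty hA⟩⟩
  have hJIex : ∀ a : V × V, a ∈ A → ∃ B : ARP A, a ∈ B.val ∧ (∃ C : ARP A, C ⋖ B) ∧
      (∀ C : ARP A, C ⋖ B → C.val = B.val \ {a}) := fun a ha => exists_JI hA ha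
  choose! F hF1 hF2 hF3 using hJIex
  have hstep1 : A.ncard ≤ {B : ARP A | ∃! C : ARP A, C ⋖ B}.ncard := by
    apply Set.ncard_le_ncard_of_injOn F ?_ ?_ (Set.toFinite _)
    · intro a ha
      obtain ⟨C₀, hC₀⟩ := hF2 a ha
      exact ⟨C₀, hC₀, fun C hC => Subtype.ext ((hF3 a ha C hC).trans (hF3 a ha C₀ hC₀).symm)⟩
    · intro a ha b hb hab
      obtain ⟨C₀, hC₀⟩ := hF2 a ha
      have e1 := hF3 a ha C₀ hC₀
      have e2 := hF3 b hb C₀ (hab ▸ hC₀)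
      have heq : (F a).val \ {a} = (F a).val \ {b} := by
        rw [e1.symm.trans e2, hab]
      by_contra hne
      have hmem : a ∈ (F a).val \ {b} :=
        ⟨hF1 a ha, fun h => hne (Set.mem_singleton_iff.1 h)⟩
      rw [← heq] at hmem
      exact hmem.2 rfl
  -- complementation anti-involution
  let g : ARP A → ARP A := fun B => ⟨A \ B.val, ARmem_compl B.2⟩
  have hgg : ∀ B, g (g B) = B := fun B => Subtype.ext (Set.diff_diff_cancel_left B.2.1)
  have hganti : ∀ {B C : ARP A}, B ≤ C → g C ≤ g B := by
    intro B C h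
    show (A \ C.val : Set (V × V)) ⊆ A \ B.val
    exact Set.diff_subset_diff_right h
  have hginj : Function.Injective g := by
    intro B C h
    have := congrArg g h
    rwa [hgg, hgg] at this
  have hglt : ∀ {B C : ARP A}, B < C → g C < g B := by
    intro B C h
    exact lt_of_le_of_ne (hganti h.le) (fun he => h.ne (hginj he).symm)
  have hgcov : ∀ {B C : ARP A}, C ⋖ B → g B ⋖ g C := by
    intro B C h
    refine ⟨hglt h.1, ?_⟩
    intro D h1 h2
    have h1' : g D < B := by have := hglt h1; rwa [hgg] at this
    have h2' : C < g D := by have := hglt h2; rwa [hgg] at this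
    exact h.2 h2' h1'
  have hstep2 : {B : ARP A | ∃! C : ARP A, C ⋖ B}.ncard ≤
      {B : ARP A | ∃! C : ARP A, B ⋖ C}.ncard := by
    apply Set.ncard_le_ncard_of_injOn g ?_ ?_ (Set.toFinite _)
    · rintro B ⟨C, hC, hCuniq⟩
      refine ⟨g C, hgcov hC, ?_⟩
      intro D hD
      have hD' : g B ⋖ g (g D) := by rwa [hgg]
      have := hgcov hD'
      simp only [hgg] at this
      have hDC : g D = C := hCuniq _ this
      rw [← hgg D, hDC]
    · intro a _ b _ hab
      exact hginj hab
  exact ⟨hstep1, hstep1.trans hstep2⟩
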